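/- arXiv:2304.13127 — 4 statements merged into one kernel-verified Lean document; each statement's English description precedes it below -/
import Mathlib

section
/- (Core estimate in the proof of Theorem 4.4.) Let b > 0 and H(x) = diag(1/2 + g(x), 1/2 - g(x)) with g : [0,b] → ℝ integrable, |g| ≤ 1/2 a.e. Suppose there exist [a,c] ⊂ (0,b) and δ > 0 such that g restricted to [a,c] is absolutely continuous with integrable derivative and |g(x)| ≤ 1/2 - δ on [a,c]. Then for every compact set K ⊂ ℂ there exists C > 0 such that for all z ∈ K and all λ ∈ ℝ, |∫ₐ^c u(z,x)ᵀ 𝒥 u(λ,x) dx| ≤ C · (∫₀^b u(λ,x)ᵀ H(x) u(λ,x) dx)^{1/2}. -/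
open MeasureTheory Matrix Set

noncomputable section

/-- The symplectic matrix 𝒥 = [[0,-1],[1,0]] over ℝ. -/
def J2 : Matrix (Fin 2) (Fin 2) ℝ := !![0, -1; 1, 0]

/-- The symplectic matrix 𝒥 = [[0,-1],[1,0]] over ℂ. -/
def J2C : Matrix (Fin 2) (Fin 2) ℂ := !![0, -1; 1, 0]

/-- Complexification of a real 2×2 matrix. -/
def cmat (M : Matrix (Fin 2) (Fin 2) ℝ) : Matrix (Fin 2) (Fin 2) ℂ :=
  M.map Complex.ofReal

set_option maxHeartbeats 1000000

lemma JH_mulVec (p q : ℝ) (v : Fin 2 → ℂ) :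
    (J2C * cmat !![p, 0; 0, q]) *ᵥ v = ![-((q:ℂ) * v 1), (p:ℂ) * v 0] := by
  funext i
  fin_cases i <;>
    simp [J2C, cmat, Matrix.mulVec, Matrix.mul_apply, dotProduct, Fin.sum_univ_two,
      Matrix.map_apply]

lemma vec_norm_le (p q : ℝ) (hp : |p| ≤ 1) (hq : |q| ≤ 1) (v : Fin 2 → ℂ) :
    ‖(![-((q:ℂ) * v 1), (p:ℂ) * v 0] : Fin 2 → ℂ)‖ ≤ ‖v‖ := by
  rw [pi_norm_le_iff_of_nonneg (norm_nonneg v)]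
  intro i
  have h0 : ‖v 0‖ ≤ ‖v‖ := norm_le_pi_norm v 0
  have h1 : ‖v 1‖ ≤ ‖v‖ := norm_le_pi_norm v 1
  fin_cases i
  · calc ‖-((q:ℂ) * v 1)‖ = |q| * ‖v 1‖ := by
          rw [norm_neg, norm_mul, Complex.norm_real, Real.norm_eq_abs]
      _ ≤ 1 * ‖v‖ := mul_le_mul hq h1 (norm_nonneg _) zero_le_one
      _ = ‖v‖ := one_mul _
  · calc ‖(p:ℂ) * v 0‖ = |p| * ‖v 0‖ := by
          rw [norm_mul, Complex.norm_real, Real.norm_eq_abs]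
      _ ≤ 1 * ‖v‖ := mul_le_mul hp h0 (norm_nonneg _) zero_le_one
      _ = ‖v‖ := one_mul _

lemma dot_J2C (w v : Fin 2 → ℂ) :
    w ⬝ᵥ (J2C *ᵥ v) = w 0 * (-(v 1)) + w 1 * v 0 := by
  simp [J2C, Matrix.mulVec, dotProduct, Fin.sum_univ_two]

lemma dot_H (p q : ℝ) (v : Fin 2 → ℂ) :
    v ⬝ᵥ (cmat !![p, 0; 0, q] *ᵥ v) = (p:ℂ) * v 0 ^ 2 + (q:ℂ) * v 1 ^ 2 := by
  simp [cmat, Matrix.mulVec, dotProduct, Fin.sum_univ_two, Matrix.map_apply]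
  ring

lemma norm_e1 : ‖(![1, 0] : Fin 2 → ℂ)‖ = 1 := by
  apply le_antisymm
  · rw [pi_norm_le_iff_of_nonneg (zero_le_one)]
    intro i; fin_cases i <;> simp
  · simpa using norm_le_pi_norm (![1, 0] : Fin 2 → ℂ) 0

lemma aux_opt {A B L : ℝ} (hA : 0 ≤ A) (hB : 0 < B)
    (h : ∀ t > 0, L ≤ A / t + B * t) : L ≤ 2 * Real.sqrt (A * B) := by
  rcases eq_or_lt_of_le hA with hA0 | hA0
  · have hL : L ≤ 0 := by
      by_contra hL
      push_neg at hL
      have := h (L / (2 * B)) (by positivity)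
      rw [← hA0] at this
      simp only [zero_div, zero_add] at this
      have h2 : B * (L / (2 * B)) = L / 2 := by field_simp
      linarith [h2 ▸ this]
    exact hL.trans (by positivity)
  · have hsA := Real.sq_sqrt hA
    have hsB := Real.sq_sqrt hB.le
    have hsA' := Real.sqrt_pos.mpr hA0
    have hsB' := Real.sqrt_pos.mpr hB
    have := h (Real.sqrt A / Real.sqrt B) (by positivity)
    have key : A / (Real.sqrt A / Real.sqrt B) + B * (Real.sqrt A / Real.sqrt B)
        = 2 * (Real.sqrt A * Real.sqrt B) := by
      field_simp
      nlinarith [hsA, hsB]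
    rw [Real.sqrt_mul hA]
    linarith [key ▸ this]

lemma vec_aesm {μ : Measure ℝ} {c0 c1 : ℝ → ℂ} (h0 : AEStronglyMeasurable c0 μ)
    (h1 : AEStronglyMeasurable c1 μ) :
    AEStronglyMeasurable (fun s => (![c0 s, c1 s] : Fin 2 → ℂ)) μ := by
  have : (fun s => (![c0 s, c1 s] : Fin 2 → ℂ))
      = fun s => c0 s • (![1, 0] : Fin 2 → ℂ) + c1 s • ![0, 1] := by
    funext s i; fin_cases i <;> simp
  rw [this]
  exact (h0.smul aestronglyMeasurable_const).add (h1.smul aestronglyMeasurable_const)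

lemma int_step (R : ℝ) (n : ℕ) (x : ℝ) :
    R * ∫ s in (0:ℝ)..x, (R * s) ^ n / n.factorial
      = (R * x) ^ (n + 1) / (n + 1).factorial := by
  have h1 : ∀ s : ℝ, (R * s) ^ n / n.factorial = (R ^ n / n.factorial) * s ^ n := by
    intro s; rw [mul_pow]; ring
  simp_rw [h1]
  rw [intervalIntegral.integral_const_mul, integral_pow]
  have h2 : ((n:ℝ) + 1) ≠ 0 := by positivity
  have h3 : ((n.factorial : ℝ)) ≠ 0 := by positivity
  rw [Nat.factorial_succ, mul_pow]
  push_cast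
  field_simp
  ring

lemma gronwall_bound
    (b : ℝ) (hb : 0 < b) (g : ℝ → ℝ)
    (hgint : IntegrableOn g (Icc 0 b))
    (hgbd : ∀ᵐ x ∂volume, x ∈ Icc (0:ℝ) b → |g x| ≤ 1/2)
    (H : ℝ → Matrix (Fin 2) (Fin 2) ℝ)
    (hH : ∀ x, H x = !![1/2 + g x, 0; 0, 1/2 - g x])
    (z : ℂ) (R : ℝ) (hz : ‖z‖ ≤ R) (hR : 0 ≤ R)
    (v : ℝ → Fin 2 → ℂ)
    (hvcont : ContinuousOn v (Icc 0 b))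
    (hveq : ∀ x ∈ Icc (0:ℝ) b,
      v x = ![1, 0] + z • ∫ s in (0:ℝ)..x, (J2C * cmat (H s)) *ᵥ v s) :
    ∀ x ∈ Icc (0:ℝ) b, ‖v x‖ ≤ 2 * Real.exp (R * b) := by
  obtain ⟨x₀, hx₀, hmax⟩ := isCompact_Icc.exists_isMaxOn (⟨0, by simp [hb.le]⟩ : (Icc (0:ℝ) b).Nonempty)
    hvcont.norm
  set C₀ := ‖v x₀‖ with hC₀def
  have hmax' : ∀ x ∈ Icc (0:ℝ) b, ‖v x‖ ≤ C₀ := fun x hx => hmax hx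
  have hC₀ : 0 ≤ C₀ := norm_nonneg _
  -- the integrand in explicit form
  set f : ℝ → Fin 2 → ℂ := fun s => (J2C * cmat (H s)) *ᵥ v s with hfdef
  have hf_eq : ∀ s, f s = ![-((((1/2 - g s : ℝ)) : ℂ) * v s 1), (((1/2 + g s : ℝ)) : ℂ) * v s 0] := by
    intro s; rw [hfdef]; simp only [hH]; exact JH_mulVec _ _ _
  -- a.e. measurability on restrictions of Icc 0 b
  have hgm : AEStronglyMeasurable g (volume.restrict (Icc 0 b)) :=
    hgint.aestronglyMeasurable
  have hvm : AEStronglyMeasurable v (volume.restrict (Icc 0 b)) :=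
    hvcont.aestronglyMeasurable measurableSet_Icc
  have hfm : AEStronglyMeasurable f (volume.restrict (Icc 0 b)) := by
    rw [show f = fun s => (![-((((1/2 - g s : ℝ)) : ℂ) * v s 1),
      (((1/2 + g s : ℝ)) : ℂ) * v s 0] : Fin 2 → ℂ) from funext hf_eq]
    apply vec_aesm (c0 := fun s => -((((1/2 - g s : ℝ)) : ℂ) * v s 1))
      (c1 := fun s => (((1/2 + g s : ℝ)) : ℂ) * v s 0)
    · exact ((Complex.continuous_ofReal.comp_aestronglyMeasurable
        ((aestronglyMeasurable_const.sub hgm))).mul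
        ((continuous_apply (1 : Fin 2)).comp_aestronglyMeasurable hvm)).neg
    · exact (Complex.continuous_ofReal.comp_aestronglyMeasurable
        ((aestronglyMeasurable_const.add hgm))).mul
        ((continuous_apply (0 : Fin 2)).comp_aestronglyMeasurable hvm)
  -- a.e. norm bound ‖f s‖ ≤ ‖v s‖ on Icc 0 b
  have hfbd : ∀ᵐ s ∂(volume.restrict (Icc 0 b)), ‖f s‖ ≤ ‖v s‖ := by
    filter_upwards [ae_restrict_of_ae hgbd, ae_restrict_mem measurableSet_Icc] with s hgs hs
    have h12 : |g s| ≤ 1/2 := hgs hs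
    rw [hf_eq]
    apply vec_norm_le
    · rw [abs_le] at h12 ⊢; constructor <;> linarith [h12.1, h12.2]
    · rw [abs_le] at h12 ⊢; constructor <;> linarith [h12.1, h12.2]
  have hsubI : ∀ x ∈ Icc (0:ℝ) b, Icc (0:ℝ) x ⊆ Icc 0 b :=
    fun x hx => Icc_subset_Icc le_rfl hx.2
  have hfint : ∀ x ∈ Icc (0:ℝ) b, IntervalIntegrable f volume 0 x := by
    intro x hx
    rw [intervalIntegrable_iff_integrableOn_Ioc_of_le hx.1]
    have hsub : Ioc (0:ℝ) x ⊆ Icc 0 b := (Ioc_subset_Icc_self).trans (hsubI x hx)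
    apply Integrable.mono' (integrable_const C₀)
      (hfm.mono_measure (Measure.restrict_mono hsub le_rfl))
    filter_upwards [ae_restrict_of_ae_restrict_of_subset hsub hfbd,
      ae_restrict_mem measurableSet_Ioc] with s hfs hs
    exact hfs.trans (hmax' s (hsub hs))
  have key : ∀ n : ℕ, ∀ x ∈ Icc (0:ℝ) b,
      ‖v x‖ ≤ (∑ k ∈ Finset.range n, (R*x)^k / k.factorial)
        + C₀ * ((R*x)^n / n.factorial) := by
    intro n
    induction n with
    | zero => intro x hx; simpa using hmax' x hx
    | succ n ih =>
      intro x hx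
      have hx0 : (0:ℝ) ≤ x := hx.1
      set φ : ℝ → ℝ := fun s => (∑ k ∈ Finset.range n, (R*s)^k / k.factorial)
        + C₀ * ((R*s)^n / n.factorial) with hφdef
      have hcpow : ∀ k : ℕ, Continuous (fun s : ℝ => (R*s)^k / k.factorial) := by
        intro k
        exact ((continuous_const.mul continuous_id).pow k).div_const _
      have hφcont : Continuous φ := by
        apply Continuous.add
        · exact continuous_finset_sum _ fun k _ => hcpow k
        · exact continuous_const.mul (hcpow n)
      have hφint : IntervalIntegrable φ volume 0 x := hφcont.intervalIntegrable _ _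
      have hnint : IntervalIntegrable (fun s => ‖f s‖) volume 0 x := (hfint x hx).norm
      have step1 : ‖v x‖ ≤ 1 + R * ∫ s in (0:ℝ)..x, ‖f s‖ := by
        rw [hveq x hx]
        calc ‖(![1,0] : Fin 2 → ℂ) + z • ∫ s in (0:ℝ)..x, f s‖
            ≤ ‖(![1,0] : Fin 2 → ℂ)‖ + ‖z • ∫ s in (0:ℝ)..x, f s‖ := norm_add_le _ _
          _ = 1 + ‖z‖ * ‖∫ s in (0:ℝ)..x, f s‖ := by rw [norm_e1, norm_smul]
          _ ≤ 1 + R * ∫ s in (0:ℝ)..x, ‖f s‖ := by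
              have h1 := intervalIntegral.norm_integral_le_integral_norm (f := f) (μ := volume) hx0
              have h2 : (0:ℝ) ≤ ∫ s in (0:ℝ)..x, ‖f s‖ :=
                le_trans (norm_nonneg _) h1
              exact add_le_add_right (mul_le_mul hz h1 (norm_nonneg _) hR) 1
      have step2 : ∫ s in (0:ℝ)..x, ‖f s‖ ≤ ∫ s in (0:ℝ)..x, φ s := by
        apply intervalIntegral.integral_mono_ae_restrict hx0 hnint hφint
        filter_upwards [ae_restrict_of_ae_restrict_of_subset (hsubI x hx) hfbd,
          ae_restrict_mem measurableSet_Icc] with s hfs hs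
        exact hfs.trans (ih s (hsubI x hx hs))
      have step3 : R * ∫ s in (0:ℝ)..x, φ s
          = (∑ k ∈ Finset.range n, (R*x)^(k+1) / (k+1).factorial)
            + C₀ * ((R*x)^(n+1) / (n+1).factorial) := by
        have hsplit : ∫ s in (0:ℝ)..x, φ s
            = (∑ k ∈ Finset.range n, ∫ s in (0:ℝ)..x, (R*s)^k / k.factorial)
              + C₀ * ∫ s in (0:ℝ)..x, (R*s)^n / n.factorial := by
          rw [hφdef]
          beta_reduce
          rw [intervalIntegral.integral_add
            (f := fun s => ∑ k ∈ Finset.range n, (R*s)^k / k.factorial)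
            (g := fun s => C₀ * ((R*s)^n / n.factorial))
            ((continuous_finset_sum _ fun k _ => hcpow k).intervalIntegrable _ _)
            ((continuous_const.mul (hcpow n)).intervalIntegrable _ _)]
          rw [intervalIntegral.integral_finset_sum
            (fun k _ => (hcpow k).intervalIntegrable _ _)]
          rw [intervalIntegral.integral_const_mul]
        rw [hsplit, mul_add, Finset.mul_sum, ← mul_assoc, mul_comm R C₀, mul_assoc]
        rw [int_step]
        congr 1
        exact Finset.sum_congr rfl fun k _ => int_step R k x
      have step4 : ∑ k ∈ Finset.range (n+1), (R*x)^k / k.factorial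
          = 1 + ∑ k ∈ Finset.range n, (R*x)^(k+1) / (k+1).factorial := by
        rw [Finset.sum_range_succ']
        simp [add_comm]
      calc ‖v x‖ ≤ 1 + R * ∫ s in (0:ℝ)..x, ‖f s‖ := step1
        _ ≤ 1 + R * ∫ s in (0:ℝ)..x, φ s :=
            add_le_add_right (mul_le_mul_of_nonneg_left step2 hR) 1
        _ = (∑ k ∈ Finset.range (n+1), (R*x)^k / k.factorial)
            + C₀ * ((R*x)^(n+1) / (n+1).factorial) := by
            rw [step3, step4]; ring
  obtain ⟨n, hn⟩ : ∃ n : ℕ, (R*b)^n / n.factorial < 1/2 :=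
    ((FloorSemiring.tendsto_pow_div_factorial_atTop (R*b)).eventually
      (gt_mem_nhds (by norm_num : (0:ℝ) < 1/2))).exists
  have hRx : R * x₀ ≤ R * b := mul_le_mul_of_nonneg_left hx₀.2 hR
  have hRx0 : 0 ≤ R * x₀ := mul_nonneg hR hx₀.1
  have hC : C₀ ≤ Real.exp (R*b) + C₀ * ((R*b)^n / n.factorial) := by
    have h1 := key n x₀ hx₀
    have h2 : ∑ k ∈ Finset.range n, (R*x₀)^k / k.factorial ≤ Real.exp (R*b) :=
      (Real.sum_le_exp_of_nonneg hRx0 n).trans (Real.exp_le_exp.mpr hRx)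
    have h3 : (R*x₀)^n / n.factorial ≤ (R*b)^n / n.factorial := by
      gcongr <;> first | exact hRx0 | exact hRx | positivity
    have h4 : C₀ * ((R*x₀)^n / n.factorial) ≤ C₀ * ((R*b)^n / n.factorial) :=
      mul_le_mul_of_nonneg_left h3 hC₀
    linarith
  have hexp : 0 < Real.exp (R*b) := Real.exp_pos _
  have hfin : C₀ ≤ 2 * Real.exp (R*b) := by nlinarith
  exact fun x hx => (hmax' x hx).trans hfin

lemma per_lambda
    (b a c δ : ℝ) (hb : 0 < b) (ha : 0 < a) (hac : a < c) (hcb : c < b) (hδ : 0 < δ)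
    (g : ℝ → ℝ)
    (hgint : IntegrableOn g (Icc 0 b))
    (hgbd : ∀ᵐ x ∂volume, x ∈ Icc (0:ℝ) b → |g x| ≤ 1/2)
    (H : ℝ → Matrix (Fin 2) (Fin 2) ℝ)
    (hH : ∀ x, H x = !![1/2 + g x, 0; 0, 1/2 - g x])
    (hgbd2 : ∀ x ∈ Icc a c, |g x| ≤ 1/2 - δ)
    (M : ℝ) (hM : 0 < M)
    (v w : ℝ → Fin 2 → ℂ)
    (hvcont : ContinuousOn v (Icc 0 b)) (hwcont : ContinuousOn w (Icc 0 b))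
    (hvbd : ∀ x ∈ Icc (0:ℝ) b, ‖v x‖ ≤ M)
    (hwreal : ∀ x ∈ Icc (0:ℝ) b, ∀ i, (w x i).im = 0) :
    ‖∫ x in a..c, v x ⬝ᵥ (J2C *ᵥ w x)‖
      ≤ (4*M*Real.sqrt ((c-a)/(4*δ)))
        * Real.sqrt (∫ x in (0:ℝ)..b, w x ⬝ᵥ (cmat (H x) *ᵥ w x)).re := by
  have hab : (0:ℝ) ≤ b := hb.le
  have hsubac : Icc a c ⊆ Icc (0:ℝ) b := Icc_subset_Icc ha.le hcb.le
  have h0mem : (0:ℝ) ∈ Icc (0:ℝ) b := ⟨le_rfl, hab⟩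
  have hamem : a ∈ Icc (0:ℝ) b := ⟨ha.le, (hac.trans hcb).le⟩
  have hcmem : c ∈ Icc (0:ℝ) b := ⟨(ha.trans hac).le, hcb.le⟩
  have hbmem : b ∈ Icc (0:ℝ) b := ⟨hab, le_rfl⟩
  -- quadratic form in real coordinates
  set Q : ℝ → ℝ := fun x => (1/2 + g x) * ((w x 0).re * (w x 0).re)
    + (1/2 - g x) * ((w x 1).re * (w x 1).re) with hQdef
  have hwre : ∀ x ∈ Icc (0:ℝ) b, ∀ i, w x i = ((w x i).re : ℂ) := fun x hx i =>
    Complex.ext (by simp) (by simp [hwreal x hx i])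
  have hFre : ∀ x ∈ Icc (0:ℝ) b, w x ⬝ᵥ (cmat (H x) *ᵥ w x) = ((Q x : ℝ) : ℂ) := by
    intro x hx
    rw [hH x, dot_H, hwre x hx 0, hwre x hx 1]
    simp only [hQdef]
    push_cast
    ring
  -- continuity facts
  have hr0c : ContinuousOn (fun x => (w x 0).re) (Icc (0:ℝ) b) :=
    Complex.continuous_re.comp_continuousOn ((continuous_apply (0 : Fin 2)).comp_continuousOn hwcont)
  have hr1c : ContinuousOn (fun x => (w x 1).re) (Icc (0:ℝ) b) :=
    Complex.continuous_re.comp_continuousOn ((continuous_apply (1 : Fin 2)).comp_continuousOn hwcont)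
  -- sup bound for w
  obtain ⟨x₁, hx₁, hmax⟩ := isCompact_Icc.exists_isMaxOn
    (⟨0, h0mem⟩ : (Icc (0:ℝ) b).Nonempty) hwcont.norm
  set W := ‖w x₁‖ with hWdef
  have hW : ∀ x ∈ Icc (0:ℝ) b, ‖w x‖ ≤ W := fun x hx => hmax hx
  have hW0 : 0 ≤ W := norm_nonneg _
  have hre_bd : ∀ x ∈ Icc (0:ℝ) b, ∀ i, |(w x i).re| ≤ W := by
    intro x hx i
    calc |(w x i).re| ≤ ‖w x i‖ := Complex.abs_re_le_norm _
      _ = ‖w x i‖ := rfl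
      _ ≤ ‖w x‖ := norm_le_pi_norm _ i
      _ ≤ W := hW x hx
  -- integrability of Q on [0,b]
  have hgm : AEStronglyMeasurable g (volume.restrict (Icc (0:ℝ) b)) :=
    hgint.aestronglyMeasurable
  have hQm : AEStronglyMeasurable Q (volume.restrict (Icc (0:ℝ) b)) := by
    have m0 : AEStronglyMeasurable (fun x => (w x 0).re) (volume.restrict (Icc (0:ℝ) b)) :=
      hr0c.aestronglyMeasurable measurableSet_Icc
    have m1 : AEStronglyMeasurable (fun x => (w x 1).re) (volume.restrict (Icc (0:ℝ) b)) :=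
      hr1c.aestronglyMeasurable measurableSet_Icc
    exact ((aestronglyMeasurable_const.add hgm).mul (m0.mul m0)).add
      ((aestronglyMeasurable_const.sub hgm).mul (m1.mul m1))
  have hQint : IntegrableOn Q (Icc 0 b) := by
    apply Integrable.mono' ((hgint.abs.add (integrable_const 1)).mul_const (2*(W*W))) hQm
    filter_upwards [ae_restrict_mem measurableSet_Icc] with x hx
    have h0 := hre_bd x hx 0
    have h1 := hre_bd x hx 1
    have ha0 := abs_nonneg ((w x 0).re)
    have ha1 := abs_nonneg ((w x 1).re)
    have e0 : (w x 0).re * (w x 0).re = |(w x 0).re| * |(w x 0).re| :=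
      (abs_mul_abs_self _).symm
    have e1 : (w x 1).re * (w x 1).re = |(w x 1).re| * |(w x 1).re| :=
      (abs_mul_abs_self _).symm
    rw [Real.norm_eq_abs]; simp only [hQdef]
    have hgx : |g x| ≥ 0 := abs_nonneg _
    have hb1 : |1/2 + g x| ≤ |g x| + 1 := by
      have := abs_add_le (1/2 : ℝ) (g x); rw [abs_le] at *; constructor <;> nlinarith [neg_abs_le (g x), le_abs_self (g x)]
    have hb2 : |1/2 - g x| ≤ |g x| + 1 := by
      rw [abs_le]; constructor <;> nlinarith [neg_abs_le (g x), le_abs_self (g x)]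
    calc |(1/2 + g x) * ((w x 0).re * (w x 0).re) + (1/2 - g x) * ((w x 1).re * (w x 1).re)|
        ≤ |(1/2 + g x)| * ((w x 0).re * (w x 0).re) + |(1/2 - g x)| * ((w x 1).re * (w x 1).re) := by
          rw [e0, e1]
          refine (abs_add_le _ _).trans ?_
          rw [abs_mul, abs_mul, abs_mul, abs_mul, abs_abs, abs_abs]
      _ ≤ (|g x| + 1) * (W*W) + (|g x| + 1) * (W*W) := by
          rw [e0, e1]
          exact add_le_add
            (mul_le_mul hb1 (mul_le_mul h0 h0 ha0 hW0) (by positivity) (by positivity))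
            (mul_le_mul hb2 (mul_le_mul h1 h1 ha1 hW0) (by positivity) (by positivity))
      _ = (|g x| + 1) * (2*(W*W)) := by ring
  have hQi : ∀ {p q : ℝ}, p ∈ Icc (0:ℝ) b → q ∈ Icc (0:ℝ) b → p ≤ q →
      IntervalIntegrable Q volume p q := by
    intro p q hp hq hpq
    rw [intervalIntegrable_iff_integrableOn_Ioc_of_le hpq]
    exact hQint.mono_set (Ioc_subset_Icc_self.trans (Icc_subset_Icc hp.1 hq.2))
  -- identify the .re of the complex integral
  have hT : (∫ x in (0:ℝ)..b, w x ⬝ᵥ (cmat (H x) *ᵥ w x)).re = ∫ x in (0:ℝ)..b, Q x := by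
    have e : ∫ x in (0:ℝ)..b, w x ⬝ᵥ (cmat (H x) *ᵥ w x)
        = ∫ x in (0:ℝ)..b, ((Q x : ℝ) : ℂ) :=
      intervalIntegral.integral_congr (fun x hx => hFre x (by rwa [uIcc_of_le hab] at hx))
    rw [e, intervalIntegral.integral_ofReal, Complex.ofReal_re]
  -- nonnegativity
  have hQnn : ∀ᵐ x ∂volume, x ∈ Icc (0:ℝ) b → 0 ≤ Q x := by
    filter_upwards [hgbd] with x hg12 hx
    have h12 := hg12 hx
    rw [abs_le] at h12
    simp only [hQdef]
    nlinarith [mul_self_nonneg ((w x 0).re), mul_self_nonneg ((w x 1).re)]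
  have hQnn' : ∀ {p q : ℝ}, p ∈ Icc (0:ℝ) b → q ∈ Icc (0:ℝ) b → p ≤ q →
      0 ≤ ∫ x in p..q, Q x := by
    intro p q hp hq hpq
    apply intervalIntegral.integral_nonneg_of_ae_restrict hpq
    filter_upwards [ae_restrict_of_ae hQnn, ae_restrict_mem measurableSet_Icc] with x h1 h2
    exact h1 (Icc_subset_Icc hp.1 hq.2 h2)
  set Qac := ∫ x in a..c, Q x with hQacdef
  have hQac0 : 0 ≤ Qac := hQnn' hamem hcmem hac.le
  have hQacT : Qac ≤ ∫ x in (0:ℝ)..b, Q x := by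
    have e1 := intervalIntegral.integral_add_adjacent_intervals
      (hQi h0mem hamem ha.le) (hQi hamem hcmem hac.le)
    have e2 := intervalIntegral.integral_add_adjacent_intervals
      (hQi h0mem hcmem (ha.trans hac).le) (hQi hcmem hbmem hcb.le)
    have n1 := hQnn' h0mem hamem ha.le
    have n3 := hQnn' hcmem hbmem hcb.le
    linarith [e1, e2]
  -- key pointwise bound on [a,c] : δ ‖w x‖² ≤ Q x
  have hkey : ∀ x ∈ Icc a c, δ * (‖w x‖ * ‖w x‖) ≤ Q x := by
    intro x hx
    have hx' := hsubac hx
    have hg2 := hgbd2 x hx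
    rw [abs_le] at hg2
    have hni : ∀ i, ‖w x i‖ = |(w x i).re| := by
      intro i
      rw [hwre x hx' i, Complex.norm_real, Real.norm_eq_abs, Complex.ofReal_re]
    have hnle : ‖w x‖ ≤ max |(w x 0).re| |(w x 1).re| := by
      rw [pi_norm_le_iff_of_nonneg (le_max_iff.mpr (Or.inl (abs_nonneg _)))]
      intro i
      rw [hni i]
      fin_cases i
      · exact le_max_left _ _
      · exact le_max_right _ _
    have e0 := abs_mul_abs_self ((w x 0).re)
    have e1 := abs_mul_abs_self ((w x 1).re)
    have s0 := mul_self_nonneg ((w x 0).re)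
    have s1 := mul_self_nonneg ((w x 1).re)
    have hmm : max |(w x 0).re| |(w x 1).re| * max |(w x 0).re| |(w x 1).re|
        ≤ (w x 0).re * (w x 0).re + (w x 1).re * (w x 1).re := by
      rcases le_total |(w x 0).re| |(w x 1).re| with h | h
      · rw [max_eq_right h]; linarith
      · rw [max_eq_left h]; linarith
    have h1 : ‖w x‖ * ‖w x‖ ≤ (w x 0).re * (w x 0).re + (w x 1).re * (w x 1).re :=
      le_trans (mul_le_mul hnle hnle (norm_nonneg _) ((norm_nonneg _).trans hnle)) hmm
    have h2 := mul_le_mul_of_nonneg_left h1 hδ.le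
    have c0 : 0 ≤ (1/2 + g x - δ) * ((w x 0).re * (w x 0).re) :=
      mul_nonneg (by linarith [hg2.1]) s0
    have c1 : 0 ≤ (1/2 - g x - δ) * ((w x 1).re * (w x 1).re) :=
      mul_nonneg (by linarith [hg2.2]) s1
    have h3 : δ * ((w x 0).re * (w x 0).re + (w x 1).re * (w x 1).re)
        ≤ (1/2 + g x) * ((w x 0).re * (w x 0).re) + (1/2 - g x) * ((w x 1).re * (w x 1).re) := by
      nlinarith [c0, c1]
    simp only [hQdef]
    linarith [h2, h3]
  -- pointwise dot bound
  have hMn : 0 ≤ M := hM.le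
  have hdot : ∀ x ∈ Icc a c, ‖v x ⬝ᵥ (J2C *ᵥ w x)‖ ≤ 2*M*‖w x‖ := by
    intro x hx
    have hx' := hsubac hx
    rw [dot_J2C]
    calc ‖v x 0 * (-(w x 1)) + v x 1 * w x 0‖
        ≤ ‖v x 0‖ * ‖w x 1‖ + ‖v x 1‖ * ‖w x 0‖ := by
          refine (norm_add_le _ _).trans ?_
          rw [norm_mul, norm_mul, norm_neg]
      _ ≤ M * ‖w x‖ + M * ‖w x‖ :=
          add_le_add
            (mul_le_mul ((norm_le_pi_norm _ 0).trans (hvbd x hx'))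
              (norm_le_pi_norm _ 1) (norm_nonneg _) hMn)
            (mul_le_mul ((norm_le_pi_norm _ 1).trans (hvbd x hx'))
              (norm_le_pi_norm _ 0) (norm_nonneg _) hMn)
      _ = 2*M*‖w x‖ := by ring
  -- interval integrability on [a,c]
  have hvc : ContinuousOn v (Icc a c) := hvcont.mono hsubac
  have hwc : ContinuousOn w (Icc a c) := hwcont.mono hsubac
  have hdotc : ContinuousOn (fun x => v x ⬝ᵥ (J2C *ᵥ w x)) (Icc a c) := by
    simp only [dot_J2C]
    exact (((continuous_apply (0:Fin 2)).comp_continuousOn hvc).mul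
      (((continuous_apply (1:Fin 2)).comp_continuousOn hwc).neg)).add
      (((continuous_apply (1:Fin 2)).comp_continuousOn hvc).mul
      ((continuous_apply (0:Fin 2)).comp_continuousOn hwc))
  have hIdot : IntervalIntegrable (fun x => ‖v x ⬝ᵥ (J2C *ᵥ w x)‖) volume a c :=
    ContinuousOn.intervalIntegrable (by rw [uIcc_of_le hac.le]; exact hdotc.norm)
  have hIw : IntervalIntegrable (fun x => ‖w x‖) volume a c :=
    ContinuousOn.intervalIntegrable (by rw [uIcc_of_le hac.le]; exact hwc.norm)
  -- AM-GM bound for each t > 0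
  have hL' : ∀ t > 0, (∫ x in a..c, ‖w x‖) ≤ (Qac/(2*δ))/t + ((c-a)/2)*t := by
    intro t ht
    have hpt : ∀ x ∈ Icc a c, ‖w x‖ ≤ (Q x / δ)/(2*t) + t/2 := by
      intro x hx
      have hk := hkey x hx
      have h2 : ‖w x‖*‖w x‖ ≤ Q x / δ := by
        rw [le_div_iff₀ hδ]; linarith
      have ht2 : (0:ℝ) < 2*t := by linarith
      have key2 : ‖w x‖ * (2*t) ≤ Q x/δ + t*t := by
        nlinarith [sq_nonneg (‖w x‖ - t)]
      have e : (Q x/δ)/(2*t) + t/2 = (Q x/δ + t*t)/(2*t) := by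
        field_simp
      rw [e, le_div_iff₀ ht2]
      exact key2
    have hIrhs : IntervalIntegrable (fun x => (Q x / δ)/(2*t) + t/2) volume a c := by
      apply IntervalIntegrable.add
      · exact ((hQi hamem hcmem hac.le).div_const δ).div_const (2*t)
      · exact intervalIntegrable_const
    calc (∫ x in a..c, ‖w x‖) ≤ ∫ x in a..c, ((Q x / δ)/(2*t) + t/2) :=
          intervalIntegral.integral_mono_on hac.le hIw hIrhs hpt
      _ = (∫ x in a..c, Q x / δ / (2*t)) + ∫ x in a..c, (t/2 : ℝ) := by
          rw [intervalIntegral.integral_add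
            (((hQi hamem hcmem hac.le).div_const δ).div_const (2*t)) intervalIntegrable_const]
      _ = (Qac/(2*δ))/t + ((c-a)/2)*t := by
          have e : ∀ x : ℝ, Q x / δ / (2*t) = (1/(δ*(2*t))) * Q x := by
            intro x; field_simp
          simp_rw [e]
          rw [intervalIntegral.integral_const_mul, intervalIntegral.integral_const]
          rw [← hQacdef]
          rw [smul_eq_mul]
          field_simp
  have hB : (0:ℝ) < (c-a)/2 := by linarith
  have hA : (0:ℝ) ≤ Qac/(2*δ) := by positivity
  have hopt := aux_opt hA hB hL'
  -- assemble
  have hchain : ‖∫ x in a..c, v x ⬝ᵥ (J2C *ᵥ w x)‖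
      ≤ 2*M * ∫ x in a..c, ‖w x‖ := by
    calc ‖∫ x in a..c, v x ⬝ᵥ (J2C *ᵥ w x)‖
        ≤ ∫ x in a..c, ‖v x ⬝ᵥ (J2C *ᵥ w x)‖ :=
          intervalIntegral.norm_integral_le_integral_norm hac.le
      _ ≤ ∫ x in a..c, 2*M*‖w x‖ :=
          intervalIntegral.integral_mono_on hac.le hIdot (hIw.const_mul _) hdot
      _ = 2*M * ∫ x in a..c, ‖w x‖ := intervalIntegral.integral_const_mul _ _
  have hsq : Real.sqrt (Qac/(2*δ) * ((c-a)/2))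
      ≤ Real.sqrt ((c-a)/(4*δ)) * Real.sqrt (∫ x in (0:ℝ)..b, Q x) := by
    have e3 : Qac/(2*δ) * ((c-a)/2) = ((c-a)/(4*δ)) * Qac := by ring
    rw [e3, Real.sqrt_mul (div_nonneg (by linarith) (by positivity))]
    exact mul_le_mul_of_nonneg_left (Real.sqrt_le_sqrt hQacT) (Real.sqrt_nonneg _)
  have hIw0 : 0 ≤ ∫ x in a..c, ‖w x‖ :=
    intervalIntegral.integral_nonneg hac.le (fun x _ => norm_nonneg _)
  rw [hT]
  calc ‖∫ x in a..c, v x ⬝ᵥ (J2C *ᵥ w x)‖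
      ≤ 2*M * ∫ x in a..c, ‖w x‖ := hchain
    _ ≤ 2*M * (2 * Real.sqrt (Qac/(2*δ) * ((c-a)/2))) :=
        mul_le_mul_of_nonneg_left hopt (by positivity)
    _ ≤ 2*M * (2 * (Real.sqrt ((c-a)/(4*δ)) * Real.sqrt (∫ x in (0:ℝ)..b, Q x))) :=
        mul_le_mul_of_nonneg_left (mul_le_mul_of_nonneg_left hsq (by norm_num)) (by positivity)
    _ = (4*M*Real.sqrt ((c-a)/(4*δ))) * Real.sqrt (∫ x in (0:ℝ)..b, Q x) := by ring

/-- core estimate in the proof of Theorem 4.4. If `g` is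
absolutely continuous on `[a,c] ⊂ (0,b)` with `|g| ≤ 1/2 - δ` there, then for every
compact `K ⊂ ℂ` there is `C > 0` with
`|∫ₐᶜ u(z,x)ᵀ 𝒥 u(λ,x) dx| ≤ C ‖u(λ,·)‖_{L²_H(0,b)}` for all `z ∈ K`, `λ ∈ ℝ`. -/
theorem pairing_bound_AC_case
    (b : ℝ) (hb : 0 < b)
    (g : ℝ → ℝ)
    (hgint : IntegrableOn g (Icc 0 b))
    (hgbd : ∀ᵐ x ∂volume, x ∈ Icc (0:ℝ) b → |g x| ≤ 1/2)
    (H : ℝ → Matrix (Fin 2) (Fin 2) ℝ)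
    (hH : ∀ x, H x = !![1/2 + g x, 0; 0, 1/2 - g x])
    (a c δ : ℝ) (ha : 0 < a) (hac : a < c) (hcb : c < b) (hδ : 0 < δ)
    (gd : ℝ → ℝ) (hgdint : IntegrableOn gd (Icc a c))
    (hgAC : ∀ x ∈ Icc a c, g x = g a + ∫ s in a..x, gd s)
    (hgbd2 : ∀ x ∈ Icc a c, |g x| ≤ 1/2 - δ)
    (u : ℂ → ℝ → Fin 2 → ℂ)
    (hucont : ∀ z, ContinuousOn (u z) (Icc 0 b))
    (hueq : ∀ z : ℂ, ∀ x ∈ Icc (0:ℝ) b,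
      u z x = ![1, 0] + z • ∫ s in (0:ℝ)..x, (J2C * cmat (H s)) *ᵥ u z s)
    (hureal : ∀ (t : ℝ), ∀ x ∈ Icc (0:ℝ) b, ∀ i, (u (t : ℂ) x i).im = 0) :
    ∀ K : Set ℂ, IsCompact K → ∃ C > 0, ∀ z ∈ K, ∀ lam : ℝ,
      ‖∫ x in a..c, u z x ⬝ᵥ (J2C *ᵥ u (lam : ℂ) x)‖
        ≤ C * Real.sqrt
            (∫ x in (0:ℝ)..b, u (lam : ℂ) x ⬝ᵥ (cmat (H x) *ᵥ u (lam : ℂ) x)).re := by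
  intro K hK
  obtain ⟨r, hr⟩ := (Metric.isBounded_iff_subset_closedBall 0).mp hK.isBounded
  set R := max r 0 with hRdef
  have hR : 0 ≤ R := le_max_right r 0
  have hzR : ∀ z ∈ K, ‖z‖ ≤ R := by
    intro z hz
    have := hr hz
    rw [Metric.mem_closedBall, dist_zero_right] at this
    exact this.trans (le_max_left r 0)
  set M := 2 * Real.exp (R * b) with hMdef
  have hM : 0 < M := by positivity
  have hsqrtpos : 0 < Real.sqrt ((c-a)/(4*δ)) :=
    Real.sqrt_pos.mpr (div_pos (by linarith) (by positivity))
  refine ⟨4*M*Real.sqrt ((c-a)/(4*δ)), by positivity, ?_⟩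
  intro z hz lam
  exact per_lambda b a c δ hb ha hac hcb hδ g hgint hgbd H hH hgbd2 M hM
    (u z) (u (lam : ℂ)) (hucont z) (hucont (lam : ℂ))
    (fun x hx => gronwall_bound b hb g hgint hgbd H hH z R (hzR z hz) hR
      (u z) (hucont z) (hueq z) x hx)
    (hureal lam)
end
end

section
/- (Norm computation for the Airy-type example.) Let f : ℝ → ℝ be twice differentiable with f''(y) = y·f(y) for all y, f(0) = 0 and f'(0) = 1. Then for all λ > 0 and b > 0: ∫₀^b [ f'(-λ^{2/3}x)² + λ^{2/3}·x·f(-λ^{2/3}x)² ] dx = (λ^{-2/3}/3)·[ 2(λ^{2/3}b)²·f(-λ^{2/3}b)² + 2λ^{2/3}b·f'(-λ^{2/3}b)² - f(-λ^{2/3}b)·f'(-λ^{2/3}b) ]. -/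
/-- norm computation for the Airy-type example. With `f'' = y f`,
`f(0) = 0`, `f'(0) = 1`, for all `λ, b > 0`:
`∫₀ᵇ [f'(-λ^{2/3}x)² + λ^{2/3} x f(-λ^{2/3}x)²] dx
  = (λ^{-2/3}/3) [2(λ^{2/3}b)² f(-λ^{2/3}b)² + 2λ^{2/3}b f'(-λ^{2/3}b)²
    - f(-λ^{2/3}b) f'(-λ^{2/3}b)]`. -/
theorem airy_norm_computation
    (f df : ℝ → ℝ)
    (hf : ∀ y, HasDerivAt f (df y) y)
    (hdf : ∀ y, HasDerivAt df (y * f y) y)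
    (hf0 : f 0 = 0) (hdf0 : df 0 = 1) :
    ∀ lam b : ℝ, 0 < lam → 0 < b →
      ∫ x in (0:ℝ)..b,
          ((df (-(lam ^ ((2:ℝ)/3)) * x))^2
            + lam ^ ((2:ℝ)/3) * x * (f (-(lam ^ ((2:ℝ)/3)) * x))^2)
        = (lam ^ (-(2:ℝ)/3) / 3) *
            (2 * (lam ^ ((2:ℝ)/3) * b)^2 * (f (-(lam ^ ((2:ℝ)/3)) * b))^2
              + 2 * lam ^ ((2:ℝ)/3) * b * (df (-(lam ^ ((2:ℝ)/3)) * b))^2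
              - f (-(lam ^ ((2:ℝ)/3)) * b) * df (-(lam ^ ((2:ℝ)/3)) * b)) := by
  intro lam b hlam hb
  set c : ℝ := lam ^ ((2:ℝ)/3) with hc
  have hcpos : 0 < c := Real.rpow_pos_of_pos hlam _
  have hinv : lam ^ (-(2:ℝ)/3) = c⁻¹ := by
    rw [hc, ← Real.rpow_neg hlam.le]; norm_num
  have hfc : Continuous f := by
    rw [continuous_iff_continuousAt]; exact fun y => (hf y).continuousAt
  have hdfc : Continuous df := by
    rw [continuous_iff_continuousAt]; exact fun y => (hdf y).continuousAt
  set F : ℝ → ℝ := fun x =>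
    (c⁻¹ / 3) * (2 * (c * x)^2 * (f (-c * x))^2 + 2 * c * x * (df (-c * x))^2
      - f (-c * x) * df (-c * x)) with hF
  have key : ∀ x ∈ Set.uIcc (0:ℝ) b,
      HasDerivAt F ((df (-c * x))^2 + c * x * (f (-c * x))^2) x := by
    intro x _
    have hx : HasDerivAt (fun x : ℝ => -c * x) (-c) x := by
      simpa using (hasDerivAt_id x).const_mul (-c)
    have h1 : HasDerivAt (fun x => f (-c * x)) (df (-c * x) * (-c)) x :=
      (hf (-c * x)).comp x hx
    have h2 : HasDerivAt (fun x => df (-c * x)) ((-c * x) * f (-c * x) * (-c)) x :=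
      (hdf (-c * x)).comp x hx
    have hsq : HasDerivAt (fun x : ℝ => 2 * (c * x)^2) (2 * (2 * (c * x) * c)) x := by
      have := (((hasDerivAt_id x).const_mul c).pow 2).const_mul 2
      simpa using this
    have hlin : HasDerivAt (fun x : ℝ => 2 * c * x) (2 * c) x := by
      simpa using (hasDerivAt_id x).const_mul (2 * c)
    have hD := (((hsq.mul (h1.pow 2)).add (hlin.mul (h2.pow 2))).sub
      (h1.mul h2)).const_mul (c⁻¹ / 3)
    convert (show HasDerivAt F _ x from hD) using 1
    push_cast
    simp only [Pi.pow_apply]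
    field_simp
    ring
  have hint : IntervalIntegrable
      (fun x => (df (-c * x))^2 + c * x * (f (-c * x))^2)
      MeasureTheory.volume 0 b := by
    apply Continuous.intervalIntegrable
    continuity
  have heq := intervalIntegral.integral_eq_sub_of_hasDerivAt key hint
  have hF0 : F 0 = 0 := by simp [hF, hf0]
  rw [hinv]
  calc ∫ x in (0:ℝ)..b, ((df (-c * x))^2 + c * x * (f (-c * x))^2)
      = F b - F 0 := heq
    _ = (c⁻¹ / 3) * (2 * (c * b)^2 * (f (-c * b))^2 + 2 * c * b * (df (-c * b))^2
          - f (-c * b) * df (-c * b)) := by rw [hF0]; simp [hF]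
end

section
/- (Trace normalization of canonical systems.) Let b > 0 and let H : [0,b] → Matrix (Fin 2) (Fin 2) ℝ be integrable, a.e. symmetric positive semidefinite, with trace H(x) > 0 a.e. Let y(x) = ∫₀ˣ trace H(s) ds, set b₁ = y(b), and let x(·) : [0,b₁] → [0,b] be the inverse of the (continuous, strictly increasing) function y. Define H₁(t) = H(x(t)) / trace H(x(t)) for t ∈ [0,b₁]. If z ∈ ℂ and u : [0,b] → ℂ² is the continuous solution of u(x) = (1,0)ᵀ + z·∫₀ˣ 𝒥 H(s) u(s) ds, then v(t) := u(x(t)) is the continuous solution on [0,b₁] of v(t) = (1,0)ᵀ + z·∫₀ᵗ 𝒥 H₁(s) v(s) ds; that is, v solves the trace-normalized canonical system 𝒥 v' = -z H₁ v with v(0) = (1,0)ᵀ, and trace H₁(t) = 1 a.e. -/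
open MeasureTheory Matrix Set

noncomputable section

lemma aux_map_measure
    (b c : ℝ) (w : ℝ → ℝ) (y : ℝ → ℝ) (xinv : ℝ → ℝ)
    (hb : 0 < b) (hc : c ∈ Icc 0 b)
    (hw : IntegrableOn w (Icc 0 b))
    (hw0 : ∀ᵐ x ∂volume, x ∈ Icc 0 b → 0 ≤ w x)
    (hy : ∀ x, y x = ∫ s in (0:ℝ)..x, w s)
    (hymono : MonotoneOn y (Icc 0 b))
    (hystrict : StrictMonoOn y (Icc 0 b))
    (hycont : ContinuousOn y (Icc 0 b))
    (hxinv1 : ∀ t ∈ Icc (0:ℝ) (y b), xinv t ∈ Icc 0 b ∧ y (xinv t) = t) :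
    Measure.map y ((volume.restrict (Ioc 0 c)).withDensity (fun x => ENNReal.ofReal (w x)))
      = volume.restrict (Ioc 0 (y c)) := by
  have y0 : y 0 = 0 := by simp [hy]
  set d : ℝ → ENNReal := fun x => ENNReal.ofReal (w x) with hd
  set μc := (volume.restrict (Ioc 0 c)).withDensity d with hμc
  have hsub : Ioc (0:ℝ) c ⊆ Icc 0 b := Ioc_subset_Icc_self.trans (Icc_subset_Icc_right hc.2)
  have hval : ∀ r, r ∈ Icc (0:ℝ) b → r ≤ c → μc (Ioc 0 r) = ENNReal.ofReal (y r) := by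
    intro r hr hrc
    rw [hμc, withDensity_apply _ measurableSet_Ioc, Measure.restrict_restrict measurableSet_Ioc]
    have he : Ioc (0:ℝ) r ∩ Ioc 0 c = Ioc 0 r := by
      rw [inter_eq_left]; exact Ioc_subset_Ioc le_rfl hrc
    rw [he]
    have hint : IntegrableOn w (Ioc 0 r) :=
      hw.mono_set (Ioc_subset_Icc_self.trans (Icc_subset_Icc_right hr.2))
    have hnn : 0 ≤ᵐ[volume.restrict (Ioc 0 r)] w := by
      filter_upwards [ae_restrict_of_ae hw0, ae_restrict_mem measurableSet_Ioc] with x h1 h2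
      exact h1 ⟨h2.1.le, h2.2.trans hr.2⟩
    rw [hd, ← ofReal_integral_eq_lintegral_ofReal hint hnn]
    congr 1
    rw [← intervalIntegral.integral_of_le hr.1, ← hy r]
  have hcompl : μc (Ioc (0:ℝ) c)ᶜ = 0 := by
    rw [hμc, withDensity_apply _ measurableSet_Ioc.compl,
      Measure.restrict_restrict measurableSet_Ioc.compl, compl_inter_self,
      Measure.restrict_empty, lintegral_zero_measure]
  haveI : IsFiniteMeasure μc := by
    constructor
    rw [← measure_inter_conull (s := univ) hcompl, univ_inter, hval c hc le_rfl]
    exact ENNReal.ofReal_lt_top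
  have hyae : AEMeasurable y μc := by
    have h1 : AEMeasurable y (volume.restrict (Icc 0 b)) :=
      hycont.aemeasurable measurableSet_Icc
    have h2 : AEMeasurable y (volume.restrict (Ioc 0 c)) :=
      h1.mono_measure (Measure.restrict_mono hsub le_rfl)
    exact h2.mono_ac (withDensity_absolutelyContinuous _ _)
  haveI : IsFiniteMeasure (Measure.map y μc) := by
    constructor
    rw [Measure.map_apply₀ hyae MeasurableSet.univ.nullMeasurableSet]
    exact (measure_mono (subset_univ _)).trans_lt (measure_lt_top _ _)
  have hycyb : y c ≤ y b := hymono hc ⟨hb.le, le_rfl⟩ hc.2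
  have hyc0 : (0:ℝ) ≤ y c := by rw [← y0]; exact hymono ⟨le_rfl, hb.le⟩ hc hc.1
  refine Measure.ext_of_Iic _ _ (fun a => ?_)
  rw [Measure.map_apply₀ hyae measurableSet_Iic.nullMeasurableSet,
    Measure.restrict_apply measurableSet_Iic,
    ← measure_inter_conull (s := y ⁻¹' Iic a) hcompl]
  rcases lt_or_ge a 0 with ha | ha
  · have h1 : y ⁻¹' Iic a ∩ Ioc 0 c = ∅ := by
      ext x
      simp only [mem_inter_iff, mem_preimage, mem_Iic, mem_Ioc, mem_empty_iff_false, iff_false,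
        not_and]
      rintro hya hx0 hxc
      have h0x : (0:ℝ) ≤ y x := by
        rw [← y0]; exact hymono ⟨le_rfl, hb.le⟩ (hsub ⟨hx0, hxc⟩) hx0.le
      linarith
    have h2 : Iic a ∩ Ioc 0 (y c) = ∅ := by
      ext x
      simp only [mem_inter_iff, mem_Iic, mem_Ioc, mem_empty_iff_false, iff_false, not_and]
      rintro hxa hx0 _
      linarith
    rw [h1, h2, measure_empty, measure_empty]
  · rcases le_or_gt (y c) a with hyca | hyca
    · have h1 : y ⁻¹' Iic a ∩ Ioc 0 c = Ioc 0 c := by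
        rw [inter_eq_right]
        intro x hx
        exact le_trans (hymono (hsub hx) hc hx.2) hyca
      have h2 : Iic a ∩ Ioc 0 (y c) = Ioc 0 (y c) := by
        rw [inter_eq_right]
        intro x hx
        exact le_trans hx.2 hyca
      rw [h1, h2, hval c hc le_rfl, Real.volume_Ioc, sub_zero]
    · have hab : a ∈ Icc (0:ℝ) (y b) := ⟨ha, hyca.le.trans hycyb⟩
      obtain ⟨hr, hyr⟩ := hxinv1 a hab
      have hrc : xinv a ≤ c := by
        by_contra hcon
        push_neg at hcon
        have := hystrict hc hr hcon
        rw [hyr] at this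
        linarith
      have h1 : y ⁻¹' Iic a ∩ Ioc 0 c = Ioc 0 (xinv a) := by
        ext x
        simp only [mem_inter_iff, mem_preimage, mem_Iic, mem_Ioc]
        constructor
        · rintro ⟨hya, hx0, hxc⟩
          refine ⟨hx0, ?_⟩
          by_contra hcon
          push_neg at hcon
          have := hystrict hr (hsub ⟨hx0, hxc⟩) hcon
          rw [hyr] at this
          linarith
        · rintro ⟨hx0, hxr⟩
          have hxmem : x ∈ Icc (0:ℝ) b := ⟨hx0.le, (hxr.trans hrc).trans hc.2⟩
          refine ⟨?_, hx0, hxr.trans hrc⟩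
          calc y x ≤ y (xinv a) := hymono hxmem hr hxr
          _ = a := hyr
      have h2 : Iic a ∩ Ioc 0 (y c) = Ioc 0 a := by
        ext x
        simp only [mem_inter_iff, mem_Iic, mem_Ioc]
        constructor
        · rintro ⟨hxa, hx0, _⟩
          exact ⟨hx0, hxa⟩
        · rintro ⟨hx0, hxa⟩
          exact ⟨hxa, hx0, by linarith⟩
      rw [h1, h2, hval (xinv a) hr hrc, hyr, Real.volume_Ioc, sub_zero]



lemma cmat_smul (r : ℝ) (M : Matrix (Fin 2) (Fin 2) ℝ) :
    cmat (r • M) = (r : ℂ) • cmat M := by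
  ext i j; simp [cmat]

/-- trace normalization of canonical systems. With
`y(x) = ∫₀ˣ trace H`, `b₁ = y(b)`, `x(·)` the inverse of `y`, and
`H₁(t) = H(x(t))/trace H(x(t))`, the reparametrized solution `v = u ∘ x(·)` solves the
trace-normalized canonical system `𝒥 v' = -z H₁ v`, `v(0) = (1,0)ᵀ`, and
`trace H₁ = 1` a.e. -/
theorem trace_normalization
    (b : ℝ) (hb : 0 < b)
    (H : ℝ → Matrix (Fin 2) (Fin 2) ℝ)
    (hHint : ∀ i j, IntegrableOn (fun x => H x i j) (Icc 0 b))
    (hH : ∀ᵐ x ∂volume, x ∈ Icc (0:ℝ) b → (H x).PosSemidef ∧ 0 < (H x).trace)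
    (y : ℝ → ℝ) (hy : ∀ x, y x = ∫ s in (0:ℝ)..x, (H s).trace)
    (b₁ : ℝ) (hb₁ : b₁ = y b)
    (xinv : ℝ → ℝ)
    (hxinv1 : ∀ t ∈ Icc (0:ℝ) b₁, xinv t ∈ Icc (0:ℝ) b ∧ y (xinv t) = t)
    (hxinv2 : ∀ x ∈ Icc (0:ℝ) b, xinv (y x) = x)
    (H₁ : ℝ → Matrix (Fin 2) (Fin 2) ℝ)
    (hH₁ : ∀ t, H₁ t = ((H (xinv t)).trace)⁻¹ • H (xinv t))
    (z : ℂ) (u : ℝ → Fin 2 → ℂ)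
    (hucont : ContinuousOn u (Icc 0 b))
    (hueq : ∀ x ∈ Icc (0:ℝ) b,
      u x = ![1, 0] + z • ∫ s in (0:ℝ)..x, (J2C * cmat (H s)) *ᵥ u s) :
    ContinuousOn (fun t => u (xinv t)) (Icc 0 b₁) ∧
    (∀ t ∈ Icc (0:ℝ) b₁,
      u (xinv t) = ![1, 0] + z • ∫ s in (0:ℝ)..t, (J2C * cmat (H₁ s)) *ᵥ u (xinv s)) ∧
    (∀ᵐ t ∂volume, t ∈ Icc (0:ℝ) b₁ → (H₁ t).trace = 1) := by
  set w : ℝ → ℝ := fun x => (H x).trace with hwdef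
  have hwint : IntegrableOn w (Icc 0 b) := by
    have : w = fun x => H x 0 0 + H x 1 1 := by
      funext x; simp [hwdef, Matrix.trace, Fin.sum_univ_two]
    rw [this]
    exact (hHint 0 0).add (hHint 1 1)
  have hw0 : ∀ᵐ x ∂volume, x ∈ Icc (0:ℝ) b → 0 ≤ w x := by
    filter_upwards [hH] with x hx hxm
    exact (hx hxm).2.le
  have y0 : y 0 = 0 := by simp [hy]
  have hymono : MonotoneOn y (Icc 0 b) := by
    intro x1 h1 x2 h2 h12
    have i1 : IntervalIntegrable w volume 0 x1 := by
      rw [intervalIntegrable_iff_integrableOn_Icc_of_le h1.1]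
      exact hwint.mono_set (Icc_subset_Icc_right h1.2)
    have i2 : IntervalIntegrable w volume x1 x2 := by
      rw [intervalIntegrable_iff_integrableOn_Icc_of_le h12]
      exact hwint.mono_set (Icc_subset_Icc h1.1 h2.2)
    have e : y x1 + ∫ s in x1..x2, w s = y x2 := by
      rw [hy, hy]
      exact intervalIntegral.integral_add_adjacent_intervals i1 i2
    have hnn : 0 ≤ ∫ s in x1..x2, w s := by
      apply intervalIntegral.integral_nonneg_of_ae_restrict h12
      filter_upwards [ae_restrict_of_ae hw0, ae_restrict_mem measurableSet_Icc] with s hs1 hs2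
      exact hs1 ⟨h1.1.trans hs2.1, hs2.2.trans h2.2⟩
    linarith
  have hystrict : StrictMonoOn y (Icc 0 b) := by
    intro x1 h1 x2 h2 h12
    rcases eq_or_lt_of_le (hymono h1 h2 h12.le) with he | hlt
    · exfalso
      have : x1 = x2 := by rw [← hxinv2 x1 h1, ← hxinv2 x2 h2, he]
      exact absurd this h12.ne
    · exact hlt
  have hycont : ContinuousOn y (Icc 0 b) := by
    have h1 : IntegrableOn w (uIcc 0 b) := by rwa [uIcc_of_le hb.le]
    have h2 := intervalIntegral.continuousOn_primitive_interval (a := 0) (b := b) h1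
    rw [uIcc_of_le hb.le] at h2
    exact h2.congr (fun x _ => hy x)
  have hb₁pos : 0 < b₁ := by
    rw [hb₁, ← y0]
    exact hystrict ⟨le_rfl, hb.le⟩ ⟨hb.le, le_rfl⟩ hb
  have hxmem : ∀ t ∈ Icc (0:ℝ) b₁, xinv t ∈ Icc (0:ℝ) b := fun t ht => (hxinv1 t ht).1
  -- continuity of xinv
  have hxcont : ContinuousOn xinv (Icc 0 b₁) := by
    intro a ha
    obtain ⟨hxa, hya⟩ := hxinv1 a ha
    have hR : a < b₁ → ContinuousWithinAt xinv (Ici a) a := by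
      intro hab
      apply StrictMonoOn.continuousWithinAt_right_of_exists_between (s := Icc 0 b₁)
      · intro t1 h1 t2 h2 h12
        by_contra hcon
        push_neg at hcon
        have := hymono (hxmem t2 h2) (hxmem t1 h1) hcon
        rw [(hxinv1 t1 h1).2, (hxinv1 t2 h2).2] at this
        linarith
      · exact Filter.mem_of_superset (Ico_mem_nhdsGE_of_mem ⟨le_rfl, hab⟩)
          (fun x hx => ⟨ha.1.trans hx.1, hx.2.le⟩)
      · intro e he
        have hlt : xinv a < b := by
          rcases eq_or_lt_of_le hxa.2 with hh | hh
          · exfalso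
            rw [hh] at hya
            rw [← hya, ← hb₁] at hab
            exact absurd rfl hab.ne
          · exact hh
        refine ⟨y (min e b), ⟨?_, ?_⟩, ?_⟩
        · rw [← y0]
          exact hymono ⟨le_rfl, hb.le⟩ ⟨hxa.1.trans (lt_min he hlt).le, min_le_right _ _⟩
            (hxa.1.trans (lt_min he hlt).le)
        · rw [hb₁]
          exact hymono ⟨hxa.1.trans (lt_min he hlt).le, min_le_right _ _⟩ ⟨hb.le, le_rfl⟩
            (min_le_right _ _)
        · rw [hxinv2 _ ⟨hxa.1.trans (lt_min he hlt).le, min_le_right _ _⟩]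
          exact ⟨lt_min he hlt, min_le_left _ _⟩
    have hL : 0 < a → ContinuousWithinAt xinv (Iic a) a := by
      intro hab
      apply StrictMonoOn.continuousWithinAt_left_of_exists_between (s := Icc 0 b₁)
      · intro t1 h1 t2 h2 h12
        by_contra hcon
        push_neg at hcon
        have := hymono (hxmem t2 h2) (hxmem t1 h1) hcon
        rw [(hxinv1 t1 h1).2, (hxinv1 t2 h2).2] at this
        linarith
      · exact Filter.mem_of_superset (Ioc_mem_nhdsLE_of_mem ⟨hab, le_rfl⟩)
          (fun x hx => ⟨hx.1.le, hx.2.trans ha.2⟩)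
      · intro e he
        have hlt : 0 < xinv a := by
          rcases eq_or_lt_of_le hxa.1 with hh | hh
          · exfalso
            rw [← hh] at hya
            rw [y0] at hya
            exact absurd hya.symm hab.ne'
          · exact hh
        refine ⟨y (max e 0), ⟨?_, ?_⟩, ?_⟩
        · have h' : y 0 ≤ y (max e 0) :=
            hymono ⟨le_rfl, hb.le⟩ ⟨le_max_right _ _, (max_lt he hlt).le.trans hxa.2⟩
              (le_max_right _ _)
          rw [y0] at h'
          exact h'
        · rw [hb₁]
          exact hymono ⟨le_max_right _ _, (max_lt he hlt).le.trans hxa.2⟩ ⟨hb.le, le_rfl⟩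
            ((max_lt he hlt).le.trans hxa.2)
        · rw [hxinv2 _ ⟨le_max_right _ _, (max_lt he hlt).le.trans hxa.2⟩]
          exact ⟨le_max_left _ _, max_lt he hlt⟩
    rcases eq_or_lt_of_le ha.1 with h0 | h0
    · subst h0
      exact (hR hb₁pos).mono (fun x hx => hx.1)
    · rcases eq_or_lt_of_le ha.2 with h1 | h1
      · exact (hL h0).mono (fun x hx => hx.2.trans h1.ge)
      · exact ((hL h0).union (hR h1)).mono
          (fun x _ => by rcases le_total x a with h | h; exacts [Or.inl h, Or.inr h])
  set d : ℝ → ENNReal := fun x => ENNReal.ofReal (w x) with hd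
  have μof : ∀ c ∈ Icc (0:ℝ) b,
      Measure.map y ((volume.restrict (Ioc 0 c)).withDensity d) = volume.restrict (Ioc 0 (y c)) :=
    fun c hc => aux_map_measure b c w y xinv hb hc hwint hw0 hy hymono hystrict hycont
      (by rw [← hb₁]; exact hxinv1)
  have hyaeAll : ∀ c ∈ Icc (0:ℝ) b,
      AEMeasurable y ((volume.restrict (Ioc 0 c)).withDensity d) := by
    intro c hc
    have h1 : AEMeasurable y (volume.restrict (Icc 0 b)) := hycont.aemeasurable measurableSet_Icc
    have h2 : AEMeasurable y (volume.restrict (Ioc 0 c)) :=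
      h1.mono_measure (Measure.restrict_mono
        (Ioc_subset_Icc_self.trans (Icc_subset_Icc_right hc.2)) le_rfl)
    exact h2.mono_ac (withDensity_absolutelyContinuous _ _)
  have hstar : ∀ N : Set ℝ, volume N = 0 → ∀ᵐ t ∂volume, t ∈ Icc (0:ℝ) b₁ → xinv t ∉ N := by
    intro N hN
    set μb := (volume.restrict (Ioc 0 b)).withDensity d with hμb
    have hbmem : b ∈ Icc (0:ℝ) b := ⟨hb.le, le_rfl⟩
    have hmap : Measure.map y μb = volume.restrict (Ioc 0 b₁) := by
      rw [hb₁]; exact μof b hbmem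
    have hyae := hyaeAll b hbmem
    set N' := toMeasurable volume N with hN'def
    have hN'0 : volume N' = 0 := by rw [measure_toMeasurable]; exact hN
    have hN'm : MeasurableSet N' := measurableSet_toMeasurable _ _
    set ρ := volume.restrict (Ioc 0 b₁) with hρ
    have hxae : AEMeasurable xinv ρ :=
      (hxcont.mono Ioc_subset_Icc_self).aemeasurable measurableSet_Ioc
    set X := hxae.mk xinv with hXdef
    have hXm : Measurable X := hxae.measurable_mk
    have hE : ρ {t | xinv t ≠ X t} = 0 := by
      have h := hxae.ae_eq_mk
      rwa [Filter.EventuallyEq, ae_iff] at h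
    set B := toMeasurable ρ {t | xinv t ≠ X t} with hBdef
    have hB0 : ρ B = 0 := by rw [measure_toMeasurable]; exact hE
    have hBm : MeasurableSet B := measurableSet_toMeasurable _ _
    have hXN : ρ (X ⁻¹' N') = 0 := by
      rw [← hmap, Measure.map_apply₀ hyae (hXm hN'm).nullMeasurableSet]
      apply measure_mono_null (t := N' ∪ (y ⁻¹' B ∪ (Ioc (0:ℝ) b)ᶜ))
      · intro x hx
        by_cases hx1 : x ∈ Ioc (0:ℝ) b
        · by_cases hx2 : y x ∈ B
          · exact Or.inr (Or.inl hx2)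
          · left
            have hxe : xinv (y x) = X (y x) := by
              by_contra hcon
              exact hx2 (subset_toMeasurable _ _ hcon)
            have hxx : xinv (y x) = x := hxinv2 x (Ioc_subset_Icc_self hx1)
            rw [hxx] at hxe
            rw [hxe]
            exact hx
        · exact Or.inr (Or.inr hx1)
      · refine measure_union_null ?_ (measure_union_null ?_ ?_)
        · rw [withDensity_apply _ hN'm]
          refine setLIntegral_measure_zero _ _ ?_
          rw [Measure.restrict_apply hN'm]
          exact measure_mono_null inter_subset_left hN'0
        · have h2 : Measure.map y μb B = 0 := by rw [hmap]; exact hB0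
          rwa [Measure.map_apply₀ hyae hBm.nullMeasurableSet] at h2
        · rw [withDensity_apply _ measurableSet_Ioc.compl,
            Measure.restrict_restrict measurableSet_Ioc.compl, compl_inter_self,
            Measure.restrict_empty]
          exact lintegral_zero_measure _
    rw [ae_iff]
    apply measure_mono_null
      (t := {(0:ℝ)} ∪ (X ⁻¹' N' ∪ {t | xinv t ≠ X t}) ∩ Ioc 0 b₁)
    · intro t ht
      simp only [mem_setOf_eq, Classical.not_imp, not_not] at ht
      obtain ⟨ht1, ht2⟩ := ht
      rcases eq_or_lt_of_le ht1.1 with h0 | h0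
      · exact Or.inl (by simp [← h0])
      · refine Or.inr ⟨?_, ⟨h0, ht1.2⟩⟩
        by_cases he : xinv t = X t
        · refine Or.inl ?_
          show X t ∈ N'
          rw [← he]
          exact subset_toMeasurable _ _ ht2
        · exact Or.inr he
    · refine measure_union_null (measure_singleton _) ?_
      rw [← Measure.restrict_apply' measurableSet_Ioc]
      exact measure_union_null hXN hE
  have hex : ∀ i j : Fin 2, ∃ gg : ℝ → ℝ, Measurable gg ∧
      (fun x => H x i j) =ᵐ[volume.restrict (Icc 0 b)] gg := fun i j =>
    ⟨(hHint i j).1.aemeasurable.mk _, (hHint i j).1.aemeasurable.measurable_mk,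
      (hHint i j).1.aemeasurable.ae_eq_mk⟩
  choose g hgm hge using hex
  set G : ℝ → Matrix (Fin 2) (Fin 2) ℝ := fun x => Matrix.of (fun i j => g i j x) with hG
  have hNH : volume {x | x ∈ Icc (0:ℝ) b ∧ H x ≠ G x} = 0 := by
    have h4 : ∀ i j : Fin 2, volume {x | x ∈ Icc (0:ℝ) b ∧ H x i j ≠ g i j x} = 0 := by
      intro i j
      have h := ae_iff.mp (hge i j)
      rw [Measure.restrict_apply' measurableSet_Icc] at h
      refine measure_mono_null ?_ h
      rintro x ⟨h1, h2⟩
      exact ⟨h2, h1⟩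
    apply measure_mono_null (t := {x | x ∈ Icc (0:ℝ) b ∧ H x 0 0 ≠ g 0 0 x} ∪
      ({x | x ∈ Icc (0:ℝ) b ∧ H x 0 1 ≠ g 0 1 x} ∪
       ({x | x ∈ Icc (0:ℝ) b ∧ H x 1 0 ≠ g 1 0 x} ∪
        {x | x ∈ Icc (0:ℝ) b ∧ H x 1 1 ≠ g 1 1 x})))
    · rintro x ⟨hx1, hx2⟩
      by_contra hcon
      simp only [mem_union, mem_setOf_eq, not_or, not_and, not_not] at hcon
      refine hx2 ?_
      ext i j
      fin_cases i <;> fin_cases j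
      · exact hcon.1 hx1
      · exact hcon.2.1 hx1
      · exact hcon.2.2.1 hx1
      · exact hcon.2.2.2 hx1
    · exact measure_union_null (h4 0 0) (measure_union_null (h4 0 1)
        (measure_union_null (h4 1 0) (h4 1 1)))
  have hNP : volume {x | x ∈ Icc (0:ℝ) b ∧ ¬((H x).PosSemidef ∧ 0 < (H x).trace)} = 0 := by
    have h := ae_iff.mp hH
    refine measure_mono_null ?_ h
    intro x hx
    simp only [mem_setOf_eq, Classical.not_imp]
    exact hx
  have hgood := hstar _ (measure_union_null hNH hNP)
  refine ⟨hucont.comp hxcont (fun t ht => hxmem t ht), ?_, ?_⟩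
  · -- part 2
    have htrG : ∀ x, (G x).trace = g 0 0 x + g 1 1 x := by
      intro x; simp [hG, Matrix.trace, Fin.sum_univ_two]
    set m : Fin 2 → Fin 2 → ℝ → ℝ := fun i j x => (g 0 0 x + g 1 1 x)⁻¹ * g i j x with hm
    have hmm : ∀ i j : Fin 2, Measurable (m i j) :=
      fun i j => (((hgm 0 0).add (hgm 1 1)).inv).mul (hgm i j)
    have hMentry : ∀ (x : ℝ) (i j : Fin 2), (((G x).trace)⁻¹ • G x) i j = m i j x := by
      intro x i j
      simp [hG, htrG, hm, Matrix.smul_apply, smul_eq_mul, Matrix.trace, Fin.sum_univ_two]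
    set F2 : ℝ → Fin 2 → ℂ :=
      fun s => (J2C * cmat (((G (xinv s)).trace)⁻¹ • G (xinv s))) *ᵥ u (xinv s) with hF2
    intro t ht
    obtain ⟨hct, hyct⟩ := hxinv1 t ht
    have hsubt : Ioc (0:ℝ) t ⊆ Icc 0 b₁ := fun s hs => ⟨hs.1.le, hs.2.trans ht.2⟩
    have hgae : ∀ᵐ x ∂volume,
        x ∉ ({x | x ∈ Icc (0:ℝ) b ∧ H x ≠ G x} ∪
          {x | x ∈ Icc (0:ℝ) b ∧ ¬((H x).PosSemidef ∧ 0 < (H x).trace)}) := by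
      rw [ae_iff]
      refine measure_mono_null ?_ (measure_union_null hNH hNP)
      intro x hx
      exact not_not.mp hx
    have hxiae : AEMeasurable xinv (volume.restrict (Ioc 0 t)) :=
      (hxcont.mono hsubt).aemeasurable measurableSet_Ioc
    have huae : ∀ j : Fin 2, AEMeasurable (fun s => u (xinv s) j) (volume.restrict (Ioc 0 t)) := by
      intro j
      have h1 : ContinuousOn (fun s => u (xinv s) j) (Icc 0 b₁) :=
        (continuous_apply j).comp_continuousOn (hucont.comp hxcont (fun r hr => hxmem r hr))
      exact (h1.mono hsubt).aemeasurable measurableSet_Ioc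
    have hoc : ∀ i j : Fin 2,
        AEMeasurable (fun s => ((m i j (xinv s) : ℝ) : ℂ)) (volume.restrict (Ioc 0 t)) :=
      fun i j => Complex.measurable_ofReal.comp_aemeasurable ((hmm i j).comp_aemeasurable hxiae)
    have hcoord : ∀ i : Fin 2, AEMeasurable (fun s => F2 s i) (volume.restrict (Ioc 0 t)) := by
      intro i
      have he : (fun s => F2 s i) = fun s =>
          (J2C i 0 * ((m 0 0 (xinv s) : ℝ) : ℂ) + J2C i 1 * ((m 1 0 (xinv s) : ℝ) : ℂ))
            * u (xinv s) 0 +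
          (J2C i 0 * ((m 0 1 (xinv s) : ℝ) : ℂ) + J2C i 1 * ((m 1 1 (xinv s) : ℝ) : ℂ))
            * u (xinv s) 1 := by
        funext s
        simp [hF2, Matrix.mulVec, Matrix.mul_apply, dotProduct, Fin.sum_univ_two, cmat,
          Matrix.map_apply, hMentry]
        fin_cases i <;> rfl
      rw [he]
      exact (((aemeasurable_const.mul (hoc 0 0)).add (aemeasurable_const.mul (hoc 1 0))).mul
        (huae 0)).add ((((aemeasurable_const.mul (hoc 0 1)).add
        (aemeasurable_const.mul (hoc 1 1)))).mul (huae 1))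
    have hvec : Continuous (fun p : ℂ × ℂ => ![p.1, p.2]) := by
      apply continuous_pi
      intro i
      fin_cases i
      · exact continuous_fst
      · exact continuous_snd
    have hsmF2 : AEStronglyMeasurable F2 (volume.restrict (Ioc 0 t)) := by
      have hv : F2 = fun s => ![F2 s 0, F2 s 1] := by
        funext s; ext i; fin_cases i <;> rfl
      rw [hv]
      exact hvec.comp_aestronglyMeasurable
        (((hcoord 0).aestronglyMeasurable).prodMk ((hcoord 1).aestronglyMeasurable))
    have hmapt : Measure.map y ((volume.restrict (Ioc 0 (xinv t))).withDensity d)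
        = volume.restrict (Ioc 0 t) := by
      have h := μof (xinv t) hct
      rwa [hyct] at h
    have key : (∫ s in (0:ℝ)..t, (J2C * cmat (H₁ s)) *ᵥ u (xinv s))
        = ∫ s in (0:ℝ)..(xinv t), (J2C * cmat (H s)) *ᵥ u s := by
      rw [intervalIntegral.integral_of_le ht.1, intervalIntegral.integral_of_le hct.1]
      have hA : (∫ s in Ioc (0:ℝ) t, (J2C * cmat (H₁ s)) *ᵥ u (xinv s))
          = ∫ s in Ioc (0:ℝ) t, F2 s := by
        apply setIntegral_congr_ae measurableSet_Ioc
        filter_upwards [hgood] with s hg hs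
        have hsm1 : s ∈ Icc 0 b₁ := hsubt hs
        have hHG : H (xinv s) = G (xinv s) := by
          by_contra hcon
          exact hg hsm1 (Or.inl ⟨hxmem s hsm1, hcon⟩)
        rw [hH₁ s, hHG]
      rw [hA]
      have hres : (∫ s in Ioc (0:ℝ) t, F2 s) = ∫ s, F2 s
          ∂(Measure.map y ((volume.restrict (Ioc 0 (xinv t))).withDensity d)) := by
        rw [hmapt]
      rw [hres, integral_map (hyaeAll _ hct) (by rw [hmapt]; exact hsmF2)]
      have hfae : AEMeasurable (fun x => ((H x).trace).toNNReal)
          (volume.restrict (Ioc 0 (xinv t))) := by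
        have hwae : AEMeasurable w (volume.restrict (Icc 0 b)) := hwint.1.aemeasurable
        exact measurable_real_toNNReal.comp_aemeasurable (hwae.mono_measure
          (Measure.restrict_mono (Ioc_subset_Icc_self.trans (Icc_subset_Icc_right hct.2)) le_rfl))
      have hdd : ((volume.restrict (Ioc 0 (xinv t))).withDensity d)
          = (volume.restrict (Ioc 0 (xinv t))).withDensity
              (fun x => (((fun x => ((H x).trace).toNNReal) x : NNReal) : ENNReal)) := rfl
      rw [hdd, integral_withDensity_eq_integral_smul₀ hfae]
      apply setIntegral_congr_ae measurableSet_Ioc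
      filter_upwards [hgae] with x hx hxIoc
      have hxb : x ∈ Icc (0:ℝ) b := ⟨hxIoc.1.le, hxIoc.2.trans hct.2⟩
      have hHG : H x = G x := by
        by_contra hcon
        exact hx (Or.inl ⟨hxb, hcon⟩)
      have hpos : 0 < (H x).trace := by
        by_contra hcon
        exact hx (Or.inr ⟨hxb, fun hand => hcon hand.2⟩)
      have hxx : xinv (y x) = x := hxinv2 x hxb
      simp only [hF2]
      rw [hxx, ← hHG, cmat_smul, Matrix.mul_smul, Matrix.smul_mulVec]
      funext i
      simp only [Pi.smul_apply, NNReal.smul_def, Real.coe_toNNReal _ (le_of_lt hpos),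
        smul_eq_mul, Complex.real_smul, Complex.ofReal_inv]
      rw [← mul_assoc, mul_inv_cancel₀ (Complex.ofReal_ne_zero.mpr (ne_of_gt hpos)), one_mul]
    rw [key]
    exact hueq _ hct
  · filter_upwards [hgood] with t hg ht
    have hnot := hg ht
    have hpos : 0 < (H (xinv t)).trace := by
      by_contra hcon
      exact hnot (Or.inr ⟨hxmem t ht, fun hand => hcon hand.2⟩)
    rw [hH₁ t, Matrix.trace_smul, smul_eq_mul]
    exact inv_mul_cancel₀ (ne_of_gt hpos)
end
end

section
/- (The trace reparametrization is an isometry of the weighted L² spaces.) Let b > 0 and let H : [0,b] → Matrix (Fin 2) (Fin 2) ℝ be integrable, a.e. symmetric positive semidefinite, with trace H(x) > 0 a.e. Let y(x) = ∫₀ˣ trace H(s) ds, b₁ = y(b), x(·) : [0,b₁] → [0,b] the inverse of y, and H₁(t) = H(x(t)) / trace H(x(t)). Then for every measurable f : [0,b] → ℂ², ∫₀^{b₁} f(x(t))* H₁(t) f(x(t)) dt = ∫₀^b f(x)* H(x) f(x) dx (both sides possibly +∞), where * denotes conjugate transpose. -/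
open MeasureTheory Matrix Set

noncomputable section

/-- the trace reparametrization is an isometry of the weighted L²
spaces. With `y(x) = ∫₀ˣ trace H`, `b₁ = y(b)`, `x(·)` the inverse of `y`, and
`H₁(t) = H(x(t))/trace H(x(t))`, for every measurable `f : [0,b] → ℂ²` one has
`∫₀^{b₁} f(x(t))* H₁(t) f(x(t)) dt = ∫₀ᵇ f(x)* H(x) f(x) dx` (possibly `+∞`). -/
theorem trace_reparametrization_isometry
    (b : ℝ) (hb : 0 < b)
    (H : ℝ → Matrix (Fin 2) (Fin 2) ℝ)
    (hHint : ∀ i j, IntegrableOn (fun x => H x i j) (Icc 0 b))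
    (hH : ∀ᵐ x ∂volume, x ∈ Icc (0:ℝ) b → (H x).PosSemidef ∧ 0 < (H x).trace)
    (y : ℝ → ℝ) (hy : ∀ x, y x = ∫ s in (0:ℝ)..x, (H s).trace)
    (b₁ : ℝ) (hb₁ : b₁ = y b)
    (xinv : ℝ → ℝ)
    (hxinv1 : ∀ t ∈ Icc (0:ℝ) b₁, xinv t ∈ Icc (0:ℝ) b ∧ y (xinv t) = t)
    (hxinv2 : ∀ x ∈ Icc (0:ℝ) b, xinv (y x) = x)
    (H₁ : ℝ → Matrix (Fin 2) (Fin 2) ℝ)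
    (hH₁ : ∀ t, H₁ t = ((H (xinv t)).trace)⁻¹ • H (xinv t))
    (f : ℝ → Fin 2 → ℂ) (hf : Measurable f) :
    ∫⁻ t in Ioc (0:ℝ) b₁,
        ENNReal.ofReal ((star (f (xinv t)) ⬝ᵥ (cmat (H₁ t) *ᵥ f (xinv t))).re)
      = ∫⁻ x in Ioc (0:ℝ) b,
          ENNReal.ofReal ((star (f x) ⬝ᵥ (cmat (H x) *ᵥ f x)).re) := by
  -- trace is integrable on Icc 0 b
  have htrInt : IntegrableOn (fun x => (H x).trace) (Icc 0 b) := by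
    have h := (hHint 0 0).add (hHint 1 1)
    simpa [Matrix.trace_fin_two, Pi.add_def] using h
  have htrIntuv : ∀ u v : ℝ, 0 ≤ u → v ≤ b →
      IntegrableOn (fun x => (H x).trace) (Ioc u v) := by
    intro u v hu hv
    exact htrInt.mono_set (fun x hx => ⟨le_trans hu hx.1.le, le_trans hx.2 hv⟩)
  -- trace nonneg / positive a.e. on subsets
  have htr_pos_ae : ∀ s : Set ℝ, MeasurableSet s → s ⊆ Icc 0 b →
      ∀ᵐ x ∂(volume.restrict s), 0 < (H x).trace := by
    intro s hms hs
    filter_upwards [ae_restrict_of_ae hH, ae_restrict_mem hms] with x hx hxs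
    exact (hx (hs hxs)).2
  -- y difference formula
  have hysub : ∀ u v : ℝ, u ∈ Icc (0:ℝ) b → v ∈ Icc (0:ℝ) b → u ≤ v →
      y v - y u = ∫ x in Ioc u v, (H x).trace := by
    intro u v hu hv huv
    have hiv : IntervalIntegrable (fun x => (H x).trace) volume 0 v := by
      apply IntegrableOn.intervalIntegrable
      apply htrInt.mono_set
      rw [uIcc_of_le hv.1]
      exact Icc_subset_Icc le_rfl hv.2
    have hiu : IntervalIntegrable (fun x => (H x).trace) volume 0 u := by
      apply IntegrableOn.intervalIntegrable
      apply htrInt.mono_set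
      rw [uIcc_of_le hu.1]
      exact Icc_subset_Icc le_rfl hu.2
    rw [hy, hy, intervalIntegral.integral_interval_sub_left hiv hiu,
      intervalIntegral.integral_of_le huv]
  -- monotonicity of y on [0,b]
  have hmono : MonotoneOn y (Icc (0:ℝ) b) := by
    intro u hu v hv huv
    have h := hysub u v hu hv huv
    have hnn : 0 ≤ ∫ x in Ioc u v, (H x).trace := by
      apply setIntegral_nonneg_of_ae_restrict
      filter_upwards [htr_pos_ae (Ioc u v) measurableSet_Ioc
        (fun x hx => ⟨le_trans hu.1 hx.1.le, le_trans hx.2 hv.2⟩)] with x hx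
      exact hx.le
    linarith
  have hstrict : StrictMonoOn y (Icc (0:ℝ) b) := by
    intro u hu v hv huv
    have hsub : Ioc u v ⊆ Icc 0 b := fun x hx => ⟨le_trans hu.1 hx.1.le, le_trans hx.2 hv.2⟩
    have hpos : 0 < ∫ x in Ioc u v, (H x).trace := by
      rw [setIntegral_pos_iff_support_of_nonneg_ae]
      · -- 0 < volume (support ∩ Ioc u v)
        have hnull : volume (Ioc u v \ Function.support fun x => (H x).trace) = 0 := by
          have hss : (Ioc u v \ Function.support fun x => (H x).trace) ⊆
              {x | ¬ (x ∈ Icc (0:ℝ) b → (H x).PosSemidef ∧ 0 < (H x).trace)} := by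
            intro x hx
            simp only [mem_setOf_eq, Classical.not_imp]
            refine ⟨hsub hx.1, fun h => ?_⟩
            have h2 := hx.2
            simp only [Function.mem_support, ne_eq, not_not] at h2
            rw [h2] at h
            exact lt_irrefl 0 h.2
          exact measure_mono_null hss (by simpa [ae_iff] using hH)
        by_contra hc
        push_neg at hc
        simp only [nonpos_iff_eq_zero] at hc
        have hle : volume (Ioc u v) ≤ volume ((Function.support fun x => (H x).trace) ∩ Ioc u v)
            + volume (Ioc u v \ Function.support fun x => (H x).trace) := by
          rw [inter_comm]
          exact (measure_mono (fun x hx => by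
            by_cases h : x ∈ Function.support fun x => (H x).trace
            · exact Or.inl ⟨hx, h⟩
            · exact Or.inr ⟨hx, h⟩)).trans (measure_union_le _ _)
        rw [hc, hnull, Real.volume_Ioc] at hle
        simp only [add_zero, nonpos_iff_eq_zero, ENNReal.ofReal_eq_zero] at hle
        linarith
      · filter_upwards [htr_pos_ae (Ioc u v) measurableSet_Ioc hsub] with x hx
        exact hx.le
      · exact htrIntuv u v hu.1 hv.2
    have h := hysub u v hu hv huv.le
    linarith
  have hy0 : y 0 = 0 := by rw [hy]; simp
  have hb₁pos : 0 < b₁ := by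
    rw [hb₁, ← hy0]
    exact hstrict (left_mem_Icc.2 hb.le) (right_mem_Icc.2 hb.le) hb
  have hxmono : MonotoneOn xinv (Icc (0:ℝ) b₁) := by
    intro t1 ht1 t2 ht2 ht
    by_contra hc
    push_neg at hc
    have h := hstrict (hxinv1 t2 ht2).1 (hxinv1 t1 ht1).1 hc
    rw [(hxinv1 t1 ht1).2, (hxinv1 t2 ht2).2] at h
    exact absurd ht (not_le.2 h)
  have hyx : ∀ x ∈ Ioc (0:ℝ) b, y x ∈ Ioc (0:ℝ) b₁ := by
    intro x hx
    constructor
    · rw [← hy0]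
      exact hstrict (left_mem_Icc.2 hb.le) ⟨hx.1.le, hx.2⟩ hx.1
    · rw [hb₁]
      exact hmono ⟨hx.1.le, hx.2⟩ (right_mem_Icc.2 hb.le) hx.2
  -- the weighted measure
  set dens : ℝ → ENNReal := fun x => ENNReal.ofReal (H x).trace with hdens
  set μ : Measure ℝ := (volume.restrict (Ioc 0 b)).withDensity dens with hμdef
  have hHaem : ∀ i j, AEMeasurable (fun x => H x i j) (volume.restrict (Ioc (0:ℝ) b)) := by
    intro i j
    exact ((hHint i j).aemeasurable).mono_measure
      (Measure.restrict_mono Ioc_subset_Icc_self le_rfl)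
  have htraem : AEMeasurable (fun x => (H x).trace) (volume.restrict (Ioc (0:ℝ) b)) := by
    have h := (hHaem 0 0).add (hHaem 1 1)
    simpa [Matrix.trace_fin_two, Pi.add_def] using h
  have hdensaem : AEMeasurable dens (volume.restrict (Ioc (0:ℝ) b)) :=
    htraem.ennreal_ofReal
  have hac : μ ≪ volume.restrict (Ioc (0:ℝ) b) := withDensity_absolutelyContinuous _ _
  have hyaem : AEMeasurable y μ := by
    refine AEMeasurable.mono_ac ?_ hac
    exact ((aemeasurable_restrict_of_monotoneOn measurableSet_Icc hmono).mono_measure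
      (Measure.restrict_mono Ioc_subset_Icc_self le_rfl))
  -- μ of an Ioc subinterval
  have hμIoc : ∀ u v : ℝ, u ∈ Icc (0:ℝ) b → v ∈ Icc (0:ℝ) b → u ≤ v →
      μ (Ioc u v) = ENNReal.ofReal (y v - y u) := by
    intro u v hu hv huv
    have hsub : Ioc u v ⊆ Ioc 0 b := fun x hx => ⟨lt_of_le_of_lt hu.1 hx.1, le_trans hx.2 hv.2⟩
    rw [hμdef, withDensity_apply _ measurableSet_Ioc,
      Measure.restrict_restrict measurableSet_Ioc, inter_eq_self_of_subset_left hsub,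
      hysub u v hu hv huv]
    rw [← ofReal_integral_eq_lintegral_ofReal (htrIntuv u v hu.1 hv.2)]
    filter_upwards [htr_pos_ae (Ioc u v) measurableSet_Ioc
      (fun x hx => ⟨le_trans hu.1 hx.1.le, le_trans hx.2 hv.2⟩)] with x hx
    exact hx.le
  have hμnull : μ (Ioc (0:ℝ) b)ᶜ = 0 := by
    rw [hμdef, withDensity_apply _ measurableSet_Ioc.compl,
      Measure.restrict_restrict measurableSet_Ioc.compl, compl_inter_self]
    simp
  haveI hμfin : IsFiniteMeasure μ := by
    constructor
    have h1 : μ univ = μ (Ioc 0 b) := by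
      rw [← measure_inter_conull hμnull, univ_inter]
    rw [h1, hμIoc 0 b (left_mem_Icc.2 hb.le) (right_mem_Icc.2 hb.le) hb.le]
    exact ENNReal.ofReal_lt_top
  -- the key pushforward identity
  have hmap : Measure.map y μ = volume.restrict (Ioc (0:ℝ) b₁) := by
    refine Measure.ext_of_Ioc _ _ (fun a c hac2 => ?_)
    rw [Measure.map_apply_of_aemeasurable hyaem measurableSet_Ioc,
      Measure.restrict_apply measurableSet_Ioc, Ioc_inter_Ioc]
    set a' := max a 0 with ha'
    set c' := min c b₁ with hc'
    rw [← measure_inter_conull hμnull]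
    rcases le_or_gt c' a' with hca | hca
    · have hempty : y ⁻¹' Ioc a c ∩ Ioc 0 b = ∅ := by
        ext x
        simp only [mem_inter_iff, mem_preimage, mem_Ioc, mem_empty_iff_false, iff_false]
        rintro ⟨⟨h1, h2⟩, hx⟩
        have hm := hyx x hx
        exact absurd (lt_of_lt_of_le (max_lt h1 hm.1) (le_min h2 hm.2)) (not_lt.2 hca)
      rw [hempty, Ioc_eq_empty (not_lt.2 hca)]
      simp
    · have ha'mem : a' ∈ Icc (0:ℝ) b₁ :=
        ⟨le_max_right a 0, le_trans hca.le (min_le_right c b₁)⟩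
      have hc'mem : c' ∈ Icc (0:ℝ) b₁ :=
        ⟨le_trans (le_max_right a 0) hca.le, min_le_right c b₁⟩
      obtain ⟨humem, hyu⟩ := hxinv1 a' ha'mem
      obtain ⟨hvmem, hyv⟩ := hxinv1 c' hc'mem
      have hseteq : y ⁻¹' Ioc a c ∩ Ioc 0 b = Ioc (xinv a') (xinv c') := by
        ext x
        simp only [mem_inter_iff, mem_preimage, mem_Ioc]
        constructor
        · rintro ⟨⟨h1, h2⟩, hx1, hx2⟩
          have hm := hyx x ⟨hx1, hx2⟩
          have hxmem : x ∈ Icc (0:ℝ) b := ⟨hx1.le, hx2⟩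
          constructor
          · by_contra hcon
            push_neg at hcon
            have hle := hmono hxmem humem hcon
            rw [hyu] at hle
            exact absurd (lt_of_lt_of_le (max_lt h1 hm.1) hle) (lt_irrefl _)
          · by_contra hcon
            push_neg at hcon
            have := hstrict hvmem hxmem hcon
            rw [hyv] at this
            exact absurd (le_min h2 hm.2) (not_le.2 this)
        · rintro ⟨hx1, hx2⟩
          have hxmem : x ∈ Icc (0:ℝ) b := ⟨le_trans humem.1 hx1.le, le_trans hx2 hvmem.2⟩
          have hya : a' < y x := by
            have := hstrict humem hxmem hx1
            rwa [hyu] at this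
          have hyc : y x ≤ c' := by
            have := hmono hxmem hvmem hx2
            rwa [hyv] at this
          exact ⟨⟨lt_of_le_of_lt (le_max_left a 0) hya, le_trans hyc (min_le_left c b₁)⟩,
            lt_of_le_of_lt humem.1 hx1, le_trans hx2 hvmem.2⟩
      have huv : xinv a' ≤ xinv c' := hxmono ha'mem hc'mem hca.le
      rw [hseteq, hμIoc _ _ humem hvmem huv, hyu, hyv, Real.volume_Ioc]
  -- the reparametrized integrand
  set g : ℝ → ENNReal := fun x =>
    ENNReal.ofReal ((star (f x) ⬝ᵥ (cmat (((H x).trace)⁻¹ • H x) *ᵥ f x)).re) with hgdef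
  have hgaem : AEMeasurable g (volume.restrict (Ioc (0:ℝ) b)) := by
    have hc : AEMeasurable (fun x => ((H x).trace)⁻¹) (volume.restrict (Ioc (0:ℝ) b)) :=
      htraem.inv
    have hfib : ∀ i, Measurable fun x => f x i := fun i => (measurable_pi_apply i).comp hf
    have hcomplex : AEMeasurable
        (fun x => (star (f x) ⬝ᵥ (cmat (((H x).trace)⁻¹ • H x) *ᵥ f x)))
        (volume.restrict (Ioc (0:ℝ) b)) := by
      simp only [cmat, dotProduct, mulVec, Fin.sum_univ_two, Matrix.map_apply,
        Matrix.smul_apply, smul_eq_mul, Pi.star_apply, RCLike.star_def]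
      have hterm : ∀ i j : Fin 2, AEMeasurable
          (fun x => ((((H x).trace⁻¹ * H x i j : ℝ)) : ℂ) * f x j)
          (volume.restrict (Ioc (0:ℝ) b)) := fun i j =>
        (Complex.measurable_ofReal.comp_aemeasurable (hc.mul (hHaem i j))).mul
          (hfib j).aemeasurable
      exact (((((Complex.conjCLE.continuous.measurable.comp (hfib 0)).aemeasurable)).mul
        (((hterm 0 0).add (hterm 0 1)))).add
        (((((Complex.conjCLE.continuous.measurable.comp (hfib 1)).aemeasurable)).mul
        (((hterm 1 0).add (hterm 1 1))))))
    exact (Complex.measurable_re.comp_aemeasurable hcomplex).ennreal_ofReal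
  -- measurability of xinv and the inverse pushforward
  have hxinvaem : AEMeasurable xinv (volume.restrict (Ioc (0:ℝ) b₁)) :=
    (aemeasurable_restrict_of_monotoneOn measurableSet_Icc hxmono).mono_measure
      (Measure.restrict_mono Ioc_subset_Icc_self le_rfl)
  have hμae_id : ∀ᵐ x ∂μ, xinv (y x) = x := by
    refine hac.ae_le ?_
    filter_upwards [ae_restrict_mem measurableSet_Ioc] with x hx
    exact hxinv2 x ⟨hx.1.le, hx.2⟩
  have hmapx : Measure.map xinv (volume.restrict (Ioc (0:ℝ) b₁)) = μ := by
    rw [← hmap, AEMeasurable.map_map_of_aemeasurable (by rwa [hmap]) hyaem]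
    have hid : (xinv ∘ y) =ᵐ[μ] id := by
      filter_upwards [hμae_id] with x hx
      simpa [Function.comp] using hx
    rw [Measure.map_congr hid, Measure.map_id]
  have hgxinv : AEMeasurable (g ∘ xinv) (volume.restrict (Ioc (0:ℝ) b₁)) := by
    refine AEMeasurable.comp_aemeasurable ?_ hxinvaem
    rw [hmapx]
    exact hgaem.mono_ac hac
  -- pointwise identity for the densities
  have hpoint : ∀ x : ℝ, 0 < (H x).trace →
      dens x * g x = ENNReal.ofReal ((star (f x) ⬝ᵥ (cmat (H x) *ᵥ f x)).re) := by
    intro x hx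
    have hcmat : cmat (((H x).trace)⁻¹ • H x)
        = ((((H x).trace)⁻¹ : ℝ) : ℂ) • cmat (H x) := by
      ext i j
      simp [cmat, Matrix.map_apply, smul_eq_mul, Complex.ofReal_mul]
    have hre : (((((H x).trace)⁻¹ : ℝ) : ℂ) * (star (f x) ⬝ᵥ (cmat (H x) *ᵥ f x))).re
        = ((H x).trace)⁻¹ * (star (f x) ⬝ᵥ (cmat (H x) *ᵥ f x)).re := by
      simp [Complex.mul_re]
    rw [hgdef]
    simp only [hcmat, smul_mulVec, dotProduct_smul, smul_eq_mul, hre, hdens]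
    rw [← ENNReal.ofReal_mul hx.le, ← mul_assoc, mul_inv_cancel₀ (ne_of_gt hx), one_mul]
  -- main computation
  calc ∫⁻ t in Ioc (0:ℝ) b₁,
        ENNReal.ofReal ((star (f (xinv t)) ⬝ᵥ (cmat (H₁ t) *ᵥ f (xinv t))).re)
      = ∫⁻ t in Ioc (0:ℝ) b₁, (g ∘ xinv) t := by
        refine lintegral_congr (fun t => ?_)
        simp only [hgdef, Function.comp_apply, hH₁ t]
    _ = ∫⁻ t, (g ∘ xinv) t ∂(Measure.map y μ) := by rw [hmap]
    _ = ∫⁻ x, (g ∘ xinv) (y x) ∂μ := lintegral_map' (by rwa [hmap]) hyaem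
    _ = ∫⁻ x, g x ∂μ := by
        refine lintegral_congr_ae ?_
        filter_upwards [hμae_id] with x hx
        simp [Function.comp_apply, hx]
    _ = ∫⁻ x in Ioc (0:ℝ) b, (dens * g) x := by
        rw [hμdef, lintegral_withDensity_eq_lintegral_mul₀' hdensaem
          (hgaem.mono_ac hac)]
    _ = ∫⁻ x in Ioc (0:ℝ) b,
          ENNReal.ofReal ((star (f x) ⬝ᵥ (cmat (H x) *ᵥ f x)).re) := by
        refine lintegral_congr_ae ?_
        filter_upwards [htr_pos_ae (Ioc 0 b) measurableSet_Ioc Ioc_subset_Icc_self]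
          with x hx
        exact hpoint x hx
end
end
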